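/- arXiv:2305.06523 — 3 statements merged into one kernel-verified Lean document; each statement's English description precedes it below -/
import Mathlib

section
/- Let w : ℝ² → ℝ be a bounded differentiable function whose gradient is bounded, with ‖w‖∞ = sup_{z∈ℝ²} |w(z)| and ‖∇w‖∞ = sup_{z∈ℝ²} ‖∇w(z)‖₂. Then for any points u = (a,b) and v = (c,d) in ℝ² with a ≤ b and c ≤ d, and any constant L ≥ max{b−a, d−c}, it holds that ∫_ℝ |w(u)·χ_{[a,b)}(t) − w(v)·χ_{[c,d)}(t)| dt ≤ (‖w‖∞ + L·‖∇w‖∞)·‖u−v‖₁, where ‖u−v‖₁ = |a−c| + |b−d|. -/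
open MeasureTheory

/-- The indicator function of the half-open interval `[a, b)`. -/
noncomputable def chiIco (a b t : ℝ) : ℝ :=
  Set.indicator (Set.Ico a b) (fun _ => (1 : ℝ)) t

/-- The point `(a, b)` viewed as an element of the Euclidean plane `ℝ²`. -/
noncomputable def pt (a b : ℝ) : EuclideanSpace ℝ (Fin 2) :=
  (WithLp.equiv 2 (Fin 2 → ℝ)).symm ![a, b]

lemma chi_int (a b : ℝ) : Integrable (fun t => chiIco a b t) := by
  unfold chiIco
  rw [integrable_indicator_iff measurableSet_Ico]
  exact integrableOn_const measure_Ico_lt_top.ne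

lemma chi_integral (a b : ℝ) (hab : a ≤ b) : ∫ t : ℝ, chiIco a b t = b - a := by
  unfold chiIco
  rw [integral_indicator measurableSet_Ico, setIntegral_const, measureReal_def, Real.volume_Ico,
    ENNReal.toReal_ofReal (by linarith), smul_eq_mul, mul_one]

lemma chi_abs_le (a b c d t : ℝ) :
    |chiIco a b t - chiIco c d t| ≤
      chiIco (min a c) (max a c) t + chiIco (min b d) (max b d) t := by
  unfold chiIco Set.indicator
  simp only [Set.mem_Ico]
  split_ifs <;> simp_all

lemma norm_pt_sub (a b c d : ℝ) : ‖pt a b - pt c d‖ ≤ |a - c| + |b - d| := by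
  have h : pt a b - pt c d = pt (a - c) (b - d) := by
    unfold pt
    ext i
    fin_cases i <;> rfl
  rw [h]
  rw [EuclideanSpace.norm_eq]
  have : ∑ i, ‖(pt (a-c) (b-d) : EuclideanSpace ℝ (Fin 2)) i‖ ^ 2 = (a-c)^2 + (b-d)^2 := by
    simp [pt, Fin.sum_univ_two, sq_abs]
  rw [this]
  have h1 : Real.sqrt ((a-c)^2 + (b-d)^2) ≤ Real.sqrt ((|a-c| + |b-d|)^2) := by
    apply Real.sqrt_le_sqrt
    nlinarith [abs_nonneg (a-c), abs_nonneg (b-d), sq_abs (a-c), sq_abs (b-d), mul_nonneg (abs_nonneg (a-c)) (abs_nonneg (b-d))]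
  simpa [Real.sqrt_sq (by positivity : (0:ℝ) ≤ |a-c| + |b-d|)] using h1

/-- **Lemma 1 (general form).** If `w : ℝ² → ℝ` is a bounded differentiable function
whose gradient is bounded (`W` bounds `|w|`, `Wg` bounds the Euclidean norm of `∇w`),
then for points `u = (a,b)`, `v = (c,d)` with `a ≤ b`, `c ≤ d` and any
`L ≥ max (b-a) (d-c)`,
`∫ℝ |w(u)·χ_{[a,b)}(t) − w(v)·χ_{[c,d)}(t)| dt ≤ (W + L·Wg)·(|a−c| + |b−d|)`. -/
theorem betti_term_stability
    (w : EuclideanSpace ℝ (Fin 2) → ℝ) (W Wg : ℝ)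
    (hdiff : Differentiable ℝ w)
    (hW : ∀ z, |w z| ≤ W)
    (hWg : ∀ z, ‖gradient w z‖ ≤ Wg)
    (a b c d L : ℝ) (hab : a ≤ b) (hcd : c ≤ d)
    (hL : max (b - a) (d - c) ≤ L) :
    ∫ t : ℝ, |w (pt a b) * chiIco a b t - w (pt c d) * chiIco c d t|
      ≤ (W + L * Wg) * (|a - c| + |b - d|) := by
  set u := pt a b
  set v := pt c d
  -- Lipschitz bound on w
  have hfd : ∀ z, ‖fderiv ℝ w z‖ ≤ Wg := by
    intro z
    have : ‖gradient w z‖ = ‖fderiv ℝ w z‖ := by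
      unfold gradient; exact (InnerProductSpace.toDual ℝ _).symm.norm_map _
    rw [← this]; exact hWg z
  have hlip : |w u - w v| ≤ Wg * ‖u - v‖ := by
    have := Convex.norm_image_sub_le_of_norm_fderiv_le
      (fun x _ => hdiff.differentiableAt) (fun x _ => hfd x) convex_univ
      (Set.mem_univ v) (Set.mem_univ u)
    simpa [Real.norm_eq_abs] using this
  have hwuv : |w u - w v| ≤ Wg * (|a - c| + |b - d|) := by
    have hWg0 : 0 ≤ Wg := le_trans (norm_nonneg _) (hWg 0)
    calc |w u - w v| ≤ Wg * ‖u - v‖ := hlip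
      _ ≤ Wg * (|a - c| + |b - d|) := by
          exact mul_le_mul_of_nonneg_left (norm_pt_sub a b c d) hWg0
  have chinn : ∀ a b t : ℝ, 0 ≤ chiIco a b t := by
    intro a b t; unfold chiIco; exact Set.indicator_nonneg (fun _ _ => zero_le_one) t
  -- pointwise bound
  have hpt : ∀ t, |w u * chiIco a b t - w v * chiIco c d t| ≤
      |w u - w v| * chiIco a b t +
        |w v| * (chiIco (min a c) (max a c) t + chiIco (min b d) (max b d) t) := by
    intro t
    have h1 : w u * chiIco a b t - w v * chiIco c d t
        = (w u - w v) * chiIco a b t + w v * (chiIco a b t - chiIco c d t) := by ring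
    rw [h1]
    calc |(w u - w v) * chiIco a b t + w v * (chiIco a b t - chiIco c d t)|
        ≤ |(w u - w v) * chiIco a b t| + |w v * (chiIco a b t - chiIco c d t)| := abs_add_le _ _
      _ = |w u - w v| * chiIco a b t + |w v| * |chiIco a b t - chiIco c d t| := by
          rw [abs_mul, abs_mul, abs_of_nonneg (chinn a b t)]
      _ ≤ |w u - w v| * chiIco a b t +
          |w v| * (chiIco (min a c) (max a c) t + chiIco (min b d) (max b d) t) := by
          exact add_le_add_right
            (mul_le_mul_of_nonneg_left (chi_abs_le a b c d t) (abs_nonneg _)) _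
  -- integrability
  have hintL : Integrable (fun t => |w u * chiIco a b t - w v * chiIco c d t|) :=
    (((chi_int a b).const_mul (w u)).sub ((chi_int c d).const_mul (w v))).abs
  have hi1 : Integrable (fun t => |w u - w v| * chiIco a b t) :=
    (chi_int a b).const_mul _
  have hi0 : Integrable (fun t : ℝ =>
      chiIco (min a c) (max a c) t + chiIco (min b d) (max b d) t) :=
    (chi_int _ _).add (chi_int _ _)
  have hi2 : Integrable (fun t : ℝ =>
      |w v| * (chiIco (min a c) (max a c) t + chiIco (min b d) (max b d) t)) :=
    hi0.const_mul _
  have hintR : Integrable (fun t => |w u - w v| * chiIco a b t +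
      |w v| * (chiIco (min a c) (max a c) t + chiIco (min b d) (max b d) t)) :=
    hi1.add hi2
  have hmono := integral_mono hintL hintR hpt
  have hR : ∫ t : ℝ, (|w u - w v| * chiIco a b t +
      |w v| * (chiIco (min a c) (max a c) t + chiIco (min b d) (max b d) t))
      = |w u - w v| * (b - a) + |w v| * (|a - c| + |b - d|) := by
    rw [integral_add hi1 hi2,
      integral_const_mul, integral_const_mul,
      integral_add (chi_int _ _) (chi_int _ _),
      chi_integral a b hab,
      chi_integral _ _ (min_le_max), chi_integral _ _ (min_le_max)]
    rw [max_sub_min_eq_abs, max_sub_min_eq_abs, abs_sub_comm c a, abs_sub_comm d b]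
  rw [hR] at hmono
  refine hmono.trans ?_
  have hWg0 : 0 ≤ Wg := le_trans (norm_nonneg _) (hWg 0)
  have hW0 : |w v| ≤ W := hW v
  have hba : b - a ≤ L := le_trans (le_max_left _ _) hL
  have habs : 0 ≤ |a - c| + |b - d| := by positivity
  nlinarith [hwuv, abs_nonneg (w u - w v), mul_le_mul_of_nonneg_right hW0 habs,
    mul_le_mul_of_nonneg_left hba hWg0, mul_nonneg hWg0 habs,
    mul_le_mul_of_nonneg_right hwuv (by linarith : (0:ℝ) ≤ b - a)]
end

section
/- Let w : ℝ² → ℝ be a bounded differentiable function whose gradient is bounded, with ‖w‖∞ = sup_{z∈ℝ²} |w(z)| and ‖∇w‖∞ = sup_{z∈ℝ²} ‖∇w(z)‖₂. If u = (a,b) and v = (c,d) in ℝ² satisfy a ≤ c ≤ d ≤ b (nested intervals [c,d) ⊆ [a,b)), then for any L ≥ max{b−a, d−c}, ∫_ℝ |w(u)·χ_{[a,b)}(t) − w(v)·χ_{[c,d)}(t)| dt ≤ (‖w‖∞ + L·‖∇w‖∞)·‖u−v‖₁, where ‖u−v‖₁ = |a−c| + |b−d|. -/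
open MeasureTheory

/-- **Case 3 of Lemma 1 (nested intervals).** If `w : ℝ² → ℝ` is a bounded differentiable
function whose gradient is bounded (`W` bounds `|w|`, `Wg` bounds the Euclidean norm of
`∇w`) and `a ≤ c ≤ d ≤ b` (so `[c,d) ⊆ [a,b)`), then for any `L ≥ max (b-a) (d-c)`,
`∫ℝ |w(u)·χ_{[a,b)}(t) − w(v)·χ_{[c,d)}(t)| dt ≤ (W + L·Wg)·(|a−c| + |b−d|)`
where `u = (a,b)` and `v = (c,d)`. -/
theorem betti_term_stability_nested
    (w : EuclideanSpace ℝ (Fin 2) → ℝ) (W Wg : ℝ)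
    (hdiff : Differentiable ℝ w)
    (hW : ∀ z, |w z| ≤ W)
    (hWg : ∀ z, ‖gradient w z‖ ≤ Wg)
    (a b c d L : ℝ) (hac : a ≤ c) (hcd : c ≤ d) (hdb : d ≤ b)
    (hL : max (b - a) (d - c) ≤ L) :
    ∫ t : ℝ, |w (pt a b) * chiIco a b t - w (pt c d) * chiIco c d t|
      ≤ (W + L * Wg) * (|a - c| + |b - d|) := by
  set A := w (pt a b) with hA
  set B := w (pt c d) with hB
  have hfd : ∀ z, ‖fderiv ℝ w z‖ ≤ Wg := by
    intro z
    have := hWg z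
    rwa [gradient, LinearIsometryEquiv.norm_map] at this
  have hWg0 : 0 ≤ Wg := le_trans (norm_nonneg _) (hWg (pt a b))
  have hW0 : 0 ≤ W := le_trans (abs_nonneg _) (hW (pt a b))
  have hnorm : ‖pt a b - pt c d‖ ≤ |a - c| + |b - d| := by
    have hcoord : ∀ i : Fin 2, (pt a b - pt c d) i = ![a, b] i - ![c, d] i := fun i => rfl
    rw [EuclideanSpace.norm_eq]
    have hsum : ∑ i : Fin 2, ‖(pt a b - pt c d) i‖ ^ 2 = (a - c) ^ 2 + (b - d) ^ 2 := by
      simp [Fin.sum_univ_two, hcoord, sq_abs]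
    rw [hsum]
    have h1 : (a - c) ^ 2 + (b - d) ^ 2 ≤ (|a - c| + |b - d|) ^ 2 := by
      nlinarith [sq_abs (a - c), sq_abs (b - d),
        mul_nonneg (abs_nonneg (a - c)) (abs_nonneg (b - d))]
    calc Real.sqrt ((a - c) ^ 2 + (b - d) ^ 2) ≤ Real.sqrt ((|a - c| + |b - d|) ^ 2) :=
          Real.sqrt_le_sqrt h1
      _ = |a - c| + |b - d| := Real.sqrt_sq (by positivity)
  have hAB : |A - B| ≤ Wg * (|a - c| + |b - d|) := by
    have hmv := Convex.norm_image_sub_le_of_norm_fderiv_le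
      (fun x _ => hdiff.differentiableAt) (fun x _ => hfd x) convex_univ
      (Set.mem_univ (pt c d)) (Set.mem_univ (pt a b))
    calc |A - B| = ‖A - B‖ := rfl
      _ ≤ Wg * ‖pt a b - pt c d‖ := hmv
      _ ≤ Wg * (|a - c| + |b - d|) := mul_le_mul_of_nonneg_left hnorm hWg0
  -- pointwise rewriting of the integrand
  have hpt : ∀ t : ℝ, |A * chiIco a b t - B * chiIco c d t| =
      Set.indicator (Set.Ico c d) (fun _ => |A - B|) t
      + Set.indicator (Set.Ico a c) (fun _ => |A|) t
      + Set.indicator (Set.Ico d b) (fun _ => |A|) t := by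
    intro t
    by_cases h1 : t ∈ Set.Ico a b
    · by_cases h2 : t ∈ Set.Ico c d
      · have h3 : t ∉ Set.Ico a c := by
          simp only [Set.mem_Ico] at *; rintro ⟨-, h⟩; linarith [h2.1]
        have h4 : t ∉ Set.Ico d b := by
          simp only [Set.mem_Ico] at *; rintro ⟨h, -⟩; linarith [h2.2]
        simp [chiIco, h1, h2, h3, h4]
      · by_cases h3 : t < c
        · have h4 : t ∈ Set.Ico a c := ⟨h1.1, h3⟩
          have h5 : t ∉ Set.Ico d b := by
            simp only [Set.mem_Ico]; rintro ⟨h, -⟩; linarith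
          simp [chiIco, h1, h2, h4, h5]
        · push_neg at h3
          have h4 : t ∈ Set.Ico d b := by
            refine ⟨?_, h1.2⟩
            by_contra h; push_neg at h
            exact h2 ⟨h3, h⟩
          have h5 : t ∉ Set.Ico a c := by
            simp only [Set.mem_Ico]; rintro ⟨-, h⟩; linarith
          simp [chiIco, h1, h2, h4, h5]
    · have h2 : t ∉ Set.Ico c d := by
        simp only [Set.mem_Ico] at *; rintro ⟨h, h'⟩; exact h1 ⟨by linarith, by linarith⟩
      have h3 : t ∉ Set.Ico a c := by
        simp only [Set.mem_Ico] at *; rintro ⟨h, h'⟩; exact h1 ⟨h, by linarith⟩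
      have h4 : t ∉ Set.Ico d b := by
        simp only [Set.mem_Ico] at *; rintro ⟨h, h'⟩; exact h1 ⟨by linarith, h'⟩
      simp [chiIco, h1, h2, h3, h4]
  have hInd : ∀ (p q : ℝ) (e : ℝ),
      Integrable (Set.indicator (Set.Ico p q) (fun _ => e)) volume := by
    intro p q e
    rw [integrable_indicator_iff measurableSet_Ico]
    exact integrableOn_const (by rw [Real.volume_Ico]; exact ENNReal.ofReal_ne_top)
  have hIval : ∀ (p q : ℝ) (e : ℝ), p ≤ q →
      ∫ t : ℝ, Set.indicator (Set.Ico p q) (fun _ => e) t = (q - p) * e := by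
    intro p q e hpq
    rw [MeasureTheory.integral_indicator_const e measurableSet_Ico,
      Real.volume_real_Ico_of_le hpq, smul_eq_mul]
  have hintegral : ∫ t : ℝ, |A * chiIco a b t - B * chiIco c d t|
      = |A - B| * (d - c) + |A| * (c - a) + |A| * (b - d) := by
    rw [integral_congr_ae (Filter.Eventually.of_forall hpt)]
    have i1 : Integrable (fun t : ℝ => Set.indicator (Set.Ico c d) (fun _ => |A - B|) t
        + Set.indicator (Set.Ico a c) (fun _ => |A|) t) volume :=
      (hInd c d _).add (hInd a c _)
    rw [integral_add i1 (hInd d b _), integral_add (hInd c d _) (hInd a c _),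
      hIval c d _ hcd, hIval a c _ hac, hIval d b _ hdb]
    ring
  rw [hintegral]
  have hdcL : d - c ≤ L := le_trans (le_max_right _ _) hL
  have hS0 : 0 ≤ |a - c| + |b - d| := by positivity
  have habs1 : |a - c| = c - a := by rw [abs_sub_comm]; exact abs_of_nonneg (by linarith)
  have habs2 : |b - d| = b - d := abs_of_nonneg (by linarith)
  have hAW : |A| ≤ W := hW _
  nlinarith [mul_le_mul_of_nonneg_right hAB (by linarith : (0:ℝ) ≤ d - c),
    mul_le_mul_of_nonneg_left hdcL (mul_nonneg hWg0 hS0),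
    mul_le_mul_of_nonneg_right hAW (by linarith : (0:ℝ) ≤ c - a),
    mul_le_mul_of_nonneg_right hAW (by linarith : (0:ℝ) ≤ b - d)]
end

section
/- Let I be a finite index set and, for each i ∈ I, let u_i = (a_i, b_i) and v_i = (c_i, d_i) be points of ℝ² with a_i ≤ b_i and c_i ≤ d_i (representing a matching between two persistence diagrams). Define the (unweighted) Betti functions β₁(t) = Σ_{i∈I} χ_{[a_i,b_i)}(t) and β₂(t) = Σ_{i∈I} χ_{[c_i,d_i)}(t). Then ∫_ℝ |β₁(t) − β₂(t)| dt ≤ Σ_{i∈I} (|a_i − c_i| + |b_i − d_i|); i.e., the L¹ distance between the Betti functions is bounded by the ℓ¹ transport cost of the matching, and hence by the L₁ 1-Wasserstein distance when the matching is optimal. -/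
open MeasureTheory

lemma chiIco_integrable (a b : ℝ) : Integrable (chiIco a b) := by
  unfold chiIco
  rw [integrable_indicator_iff measurableSet_Ico]
  exact integrableOn_const measure_Ico_lt_top.ne

lemma chiIco_pointwise (a b c d t : ℝ) (hab : a ≤ b) (hcd : c ≤ d) :
    |chiIco a b t - chiIco c d t| ≤
      chiIco (min a c) (max a c) t + chiIco (min b d) (max b d) t := by
  simp only [chiIco, Set.indicator_apply, Set.mem_Ico, min_le_iff, lt_max_iff]
  split_ifs <;> (try push_neg at *) <;> simp_all <;> (casesm* _ ∧ _) <;> first | tauto | linarith | (constructor <;> linarith)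

lemma chiIco_integral (x y : ℝ) (h : x ≤ y) : ∫ t, chiIco x y t = y - x := by
  unfold chiIco
  rw [integral_indicator measurableSet_Ico]
  simp [Real.volume_Ico, ENNReal.toReal_ofReal (sub_nonneg.2 h)]
  exact h

/-- **Stability of unweighted Betti functions (Theorem 1 with `w ≡ 1`).** Given a
matching `i ↦ ((aᵢ, bᵢ), (cᵢ, dᵢ))` between two persistence diagrams, with `aᵢ ≤ bᵢ`
and `cᵢ ≤ dᵢ`, the Betti functions `β₁(t) = Σᵢ χ_{[aᵢ,bᵢ)}(t)` and
`β₂(t) = Σᵢ χ_{[cᵢ,dᵢ)}(t)` satisfy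
`∫ℝ |β₁(t) − β₂(t)| dt ≤ Σᵢ (|aᵢ − cᵢ| + |bᵢ − dᵢ|)`,
i.e. the `L¹` distance between the Betti functions is bounded by the `ℓ¹` transport
cost of the matching. -/
theorem betti_function_stability_unweighted
    (ι : Type*) [Fintype ι]
    (a b c d : ι → ℝ)
    (hab : ∀ i, a i ≤ b i) (hcd : ∀ i, c i ≤ d i) :
    ∫ t : ℝ, |(∑ i, chiIco (a i) (b i) t) - ∑ i, chiIco (c i) (d i) t|
      ≤ ∑ i, (|a i - c i| + |b i - d i|) := by
  have key : ∀ t : ℝ, |(∑ i, chiIco (a i) (b i) t) - ∑ i, chiIco (c i) (d i) t|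
      ≤ ∑ i, (chiIco (min (a i) (c i)) (max (a i) (c i)) t
              + chiIco (min (b i) (d i)) (max (b i) (d i)) t) := by
    intro t
    rw [← Finset.sum_sub_distrib]
    refine (Finset.abs_sum_le_sum_abs _ _).trans ?_
    exact Finset.sum_le_sum fun i _ => chiIco_pointwise _ _ _ _ t (hab i) (hcd i)
  have hint1 : Integrable (fun t => |(∑ i, chiIco (a i) (b i) t) - ∑ i, chiIco (c i) (d i) t|) := by
    apply Integrable.abs
    exact (integrable_finset_sum _ fun i _ => chiIco_integrable _ _).sub
      (integrable_finset_sum _ fun i _ => chiIco_integrable _ _)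
  have hint2 : Integrable (fun t => ∑ i, (chiIco (min (a i) (c i)) (max (a i) (c i)) t
      + chiIco (min (b i) (d i)) (max (b i) (d i)) t)) :=
    integrable_finset_sum _ fun i _ => (chiIco_integrable _ _).add (chiIco_integrable _ _)
  refine (integral_mono hint1 hint2 key).trans ?_
  rw [integral_finset_sum (f := fun i t => chiIco (min (a i) (c i)) (max (a i) (c i)) t
      + chiIco (min (b i) (d i)) (max (b i) (d i)) t) _
      fun i _ => (chiIco_integrable _ _).add (chiIco_integrable _ _)]
  apply le_of_eq
  refine Finset.sum_congr rfl fun i _ => ?_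
  rw [integral_add (chiIco_integrable _ _) (chiIco_integrable _ _),
    chiIco_integral _ _ (min_le_max), chiIco_integral _ _ (min_le_max),
    max_sub_min_eq_abs, max_sub_min_eq_abs, abs_sub_comm (c i) (a i), abs_sub_comm (d i) (b i)]
end
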